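/- For any scoring function s and any u ∈ (0,1), the false positive rate at rate u is minimized by the posterior: α(s,u) ≥ α(η,u), where α(s,u) = P(s(X) ≥ Q(s,1−u) | Y=−1). -/

import Mathlib

open MeasureTheory Set

namespace LocalRanking

variable {Ω 𝒳 : Type*} [MeasurableSpace Ω] [MeasurableSpace 𝒳]

/-- The generalized-inverse `v`-quantile of a distribution `μ` on `ℝ`. -/
noncomputable def quantile (μ : Measure ℝ) (v : ℝ) : ℝ :=
  sInf {t : ℝ | v ≤ (μ (Iic t)).toReal}

/-- The set `C_{s,u} = {x : s(x) ≥ Q(s, 1−u)}` of top instances at rate `u` for score `s`. -/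
noncomputable def topSet (P : Measure Ω) (X : Ω → 𝒳) (s : 𝒳 → ℝ) (u : ℝ) : Set 𝒳 :=
  {x | quantile (P.map fun ω => s (X ω)) (1 - u) ≤ s x}

/-- True positive rate `β(s,u) = P(X ∈ C_{s,u} | Y=+1)`. -/
noncomputable def betaS (P : Measure Ω) (X : Ω → 𝒳) (Y : Ω → ℝ) (s : 𝒳 → ℝ) (u : ℝ) : ℝ :=
  (P {ω | X ω ∈ topSet P X s u ∧ Y ω = 1}).toReal / (P {ω | Y ω = 1}).toReal

/-- False positive rate `α(s,u) = P(X ∈ C_{s,u} | Y=−1)`. -/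
noncomputable def alphaS (P : Measure Ω) (X : Ω → 𝒳) (Y : Ω → ℝ) (s : 𝒳 → ℝ) (u : ℝ) : ℝ :=
  (P {ω | X ω ∈ topSet P X s u ∧ Y ω = -1}).toReal / (P {ω | Y ω = -1}).toReal

/-- The false positive rate at rate `u` is minimized by the posterior:
`α(s,u) ≥ α(η,u)`. -/
theorem posterior_minimizes_false_positive_rate
    (P : Measure Ω) [IsProbabilityMeasure P]
    (X : Ω → 𝒳) (Y : Ω → ℝ) (η : 𝒳 → ℝ)
    (hX : Measurable X) (hY : Measurable Y) (hηm : Measurable η)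
    (hYval : ∀ ω, Y ω = 1 ∨ Y ω = -1)
    (hηbd : ∀ x, η x ∈ Icc (0 : ℝ) 1)
    (hη : ∀ A : Set 𝒳, MeasurableSet A →
      (P {ω | X ω ∈ A ∧ Y ω = 1}).toReal = ∫ x in A, η x ∂(P.map X))
    (p : ℝ) (hp : p = (P {ω | Y ω = 1}).toReal) (hp01 : p ∈ Ioo (0 : ℝ) 1)
    (u : ℝ) (hu : u ∈ Ioo (0 : ℝ) 1)
    (s : 𝒳 → ℝ) (hs : Measurable s)
    (hmass_s : ((P.map X) (topSet P X s u)).toReal = u)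
    (hmass_η : ((P.map X) (topSet P X η u)).toReal = u) :
    alphaS P X Y η u ≤ alphaS P X Y s u := by
  set μ := P.map X with hμdef
  have hμprob : IsProbabilityMeasure μ := Measure.isProbabilityMeasure_map hX.aemeasurable
  set Cs := topSet P X s u with hCsdef
  set Cη := topSet P X η u with hCηdef
  set t : ℝ := quantile (P.map fun ω => η (X ω)) (1 - u) with htdef
  have hCs : MeasurableSet Cs := by
    have : Cs = s ⁻¹' Ici (quantile (P.map fun ω => s (X ω)) (1 - u)) := rfl
    rw [this]; exact hs measurableSet_Ici
  have hCη : MeasurableSet Cη := by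
    have : Cη = η ⁻¹' Ici t := rfl
    rw [this]; exact hηm measurableSet_Ici
  -- splitting lemma
  have split : ∀ C : Set 𝒳, MeasurableSet C →
      (P {ω | X ω ∈ C ∧ Y ω = -1}).toReal
        = (μ C).toReal - (P {ω | X ω ∈ C ∧ Y ω = 1}).toReal := by
    intro C hC
    have hm1 : MeasurableSet {ω | X ω ∈ C ∧ Y ω = 1} :=
      (hX hC).inter (hY (measurableSet_singleton 1))
    have hm2 : MeasurableSet {ω | X ω ∈ C ∧ Y ω = -1} :=
      (hX hC).inter (hY (measurableSet_singleton (-1)))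
    have hXC : X ⁻¹' C = {ω | X ω ∈ C ∧ Y ω = 1} ∪ {ω | X ω ∈ C ∧ Y ω = -1} := by
      ext ω
      simp only [mem_preimage, mem_union, mem_setOf_eq]
      constructor
      · intro h
        rcases hYval ω with h1 | h1
        · exact Or.inl ⟨h, h1⟩
        · exact Or.inr ⟨h, h1⟩
      · rintro (⟨h, -⟩ | ⟨h, -⟩) <;> exact h
    have hdisj : Disjoint {ω | X ω ∈ C ∧ Y ω = 1} {ω | X ω ∈ C ∧ Y ω = -1} := by
      rw [Set.disjoint_left]
      rintro ω ⟨-, h1⟩ ⟨-, h2⟩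
      rw [h1] at h2; norm_num at h2
    have hsum : μ C = P {ω | X ω ∈ C ∧ Y ω = 1} + P {ω | X ω ∈ C ∧ Y ω = -1} := by
      rw [hμdef, Measure.map_apply hX hC, hXC, measure_union hdisj hm2]
    rw [hsum, ENNReal.toReal_add (measure_ne_top _ _) (measure_ne_top _ _)]
    ring
  -- integrability of η
  have hint : Integrable η μ := by
    have hb : ∀ᵐ x ∂μ, ‖η x‖ ≤ 1 := ae_of_all _ fun x => by
      rw [Real.norm_eq_abs, abs_le]
      exact ⟨by linarith [(hηbd x).1], (hηbd x).2⟩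
    exact (integrable_const (1 : ℝ)).mono' hηm.aestronglyMeasurable hb
  -- equal masses of symmetric differences
  have hms : (μ (Cs \ Cη)).toReal = (μ (Cη \ Cs)).toReal := by
    have e1 : μ (Cs ∩ Cη) + μ (Cs \ Cη) = μ Cs := measure_inter_add_diff Cs hCη
    have e2 : μ (Cη ∩ Cs) + μ (Cη \ Cs) = μ Cη := measure_inter_add_diff Cη hCs
    have e1' : (μ (Cs ∩ Cη)).toReal + (μ (Cs \ Cη)).toReal = u := by
      rw [← ENNReal.toReal_add (measure_ne_top _ _) (measure_ne_top _ _), e1]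
      exact hmass_s
    have e2' : (μ (Cη ∩ Cs)).toReal + (μ (Cη \ Cs)).toReal = u := by
      rw [← ENNReal.toReal_add (measure_ne_top _ _) (measure_ne_top _ _), e2]
      exact hmass_η
    rw [inter_comm] at e2'
    linarith
  -- the key integral inequality
  have hkey : ∫ x in Cs, η x ∂μ ≤ ∫ x in Cη, η x ∂μ := by
    have d1 : ∫ x in Cs ∩ Cη, η x ∂μ + ∫ x in Cs \ Cη, η x ∂μ = ∫ x in Cs, η x ∂μ :=
      integral_inter_add_diff hCη hint.integrableOn
    have d2 : ∫ x in Cη ∩ Cs, η x ∂μ + ∫ x in Cη \ Cs, η x ∂μ = ∫ x in Cη, η x ∂μ :=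
      integral_inter_add_diff hCs hint.integrableOn
    have hconst1 : IntegrableOn (fun _ : 𝒳 => t) (Cs \ Cη) μ :=
      integrableOn_const (measure_ne_top _ _)
    have hconst2 : IntegrableOn (fun _ : 𝒳 => t) (Cη \ Cs) μ :=
      integrableOn_const (measure_ne_top _ _)
    have hb1 : ∫ x in Cs \ Cη, η x ∂μ ≤ (μ (Cs \ Cη)).toReal * t := by
      calc ∫ x in Cs \ Cη, η x ∂μ ≤ ∫ _x in Cs \ Cη, t ∂μ := by
            refine setIntegral_mono_on hint.integrableOn hconst1 (hCs.diff hCη) ?_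
            intro x hx
            have : ¬ (t ≤ η x) := hx.2
            linarith [lt_of_not_ge this]
        _ = (μ (Cs \ Cη)).toReal * t := by rw [setIntegral_const]; rfl
    have hb2 : (μ (Cη \ Cs)).toReal * t ≤ ∫ x in Cη \ Cs, η x ∂μ := by
      calc (μ (Cη \ Cs)).toReal * t = ∫ _x in Cη \ Cs, t ∂μ := by rw [setIntegral_const]; rfl
        _ ≤ ∫ x in Cη \ Cs, η x ∂μ := by
            refine setIntegral_mono_on hconst2 hint.integrableOn (hCη.diff hCs) ?_
            intro x hx
            exact hx.1
    have hic : ∫ x in Cs ∩ Cη, η x ∂μ = ∫ x in Cη ∩ Cs, η x ∂μ := by rw [inter_comm]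
    rw [hms] at hb1
    linarith
  -- conclude
  have hnum : (P {ω | X ω ∈ Cη ∧ Y ω = -1}).toReal ≤ (P {ω | X ω ∈ Cs ∧ Y ω = -1}).toReal := by
    rw [split Cη hCη, split Cs hCs, hη Cη hCη, hη Cs hCs]
    have : (μ Cη).toReal = (μ Cs).toReal := by rw [hmass_s, hmass_η]
    linarith
  unfold alphaS
  rw [← hCsdef, ← hCηdef]
  gcongr

end LocalRanking
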